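/- For every natural number N and every vector ψ ∈ ℂ^{N+1} whose last component vanishes (ψ_N = 0), the expectation value of the action difference equals the squared norm of ψ: ⟨ψ, D_Nψ⟩ = Σ_{k=0}^{N} |ψ_k|², where D_N = (Q_N P_N − P_N Q_N)/i. In particular, for unit vectors supported away from the top Fock level, ⟨ψ, D_Nψ⟩ = 1, recovering the canonical value of the commutator. -/

import Mathlib

open Matrix Polynomial

/-- Heisenberg's tridiagonal position matrix `Q_N` of size `(N+1) × (N+1)`:
`Q_{j,k} = (√(k+1)·δ_{j,k+1} + √k·δ_{j,k-1}) / √2`. -/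
noncomputable def Qmat (N : ℕ) : Matrix (Fin (N+1)) (Fin (N+1)) ℂ :=
  Matrix.of fun j k =>
    (((1 / Real.sqrt 2) *
        (Real.sqrt ((k : ℕ) + 1) * (if (j : ℕ) = (k : ℕ) + 1 then 1 else 0) +
         Real.sqrt (k : ℕ) * (if (j : ℕ) + 1 = (k : ℕ) then 1 else 0)) : ℝ) : ℂ)

/-- Heisenberg's tridiagonal momentum matrix `P_N` of size `(N+1) × (N+1)`:
`P_{j,k} = (i/√2)·(√(k+1)·δ_{j,k+1} − √k·δ_{j,k-1})`. -/
noncomputable def Pmat (N : ℕ) : Matrix (Fin (N+1)) (Fin (N+1)) ℂ :=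
  Matrix.of fun j k =>
    (Complex.I / (Real.sqrt 2 : ℂ)) *
      ((Real.sqrt ((k : ℕ) + 1) : ℂ) * (if (j : ℕ) = (k : ℕ) + 1 then 1 else 0) -
       (Real.sqrt (k : ℕ) : ℂ) * (if (j : ℕ) + 1 = (k : ℕ) then 1 else 0))

/-- The action difference `D_N = (Q_N P_N − P_N Q_N)/i`. -/
noncomputable def Dmat (N : ℕ) : Matrix (Fin (N+1)) (Fin (N+1)) ℂ :=
  Complex.I⁻¹ • (Qmat N * Pmat N - Pmat N * Qmat N)

noncomputable def Amat (N : ℕ) : Matrix (Fin (N+1)) (Fin (N+1)) ℂ :=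
  Matrix.of fun j k => (Real.sqrt (k : ℕ) : ℂ) * (if (j : ℕ) + 1 = (k : ℕ) then 1 else 0)

noncomputable def Cmat (N : ℕ) : Matrix (Fin (N+1)) (Fin (N+1)) ℂ :=
  Matrix.of fun j k => (Real.sqrt ((k : ℕ) + 1) : ℂ) * (if (j : ℕ) = (k : ℕ) + 1 then 1 else 0)

lemma sum_delta (M t : ℕ) (f : ℕ → ℂ) :
    ∑ n ∈ Finset.range M, (if n = t then f n else 0) = if t < M then f t else 0 := by
  rw [Finset.sum_ite_eq' (Finset.range M) t f]; simp

lemma AC_apply (N : ℕ) (j k : Fin (N+1)) :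
    (Amat N * Cmat N) j k = if j = k ∧ (k : ℕ) < N then (((k:ℕ) : ℂ) + 1) else 0 := by
  simp only [Amat, Cmat, Matrix.mul_apply, Matrix.of_apply]
  rw [Fin.sum_univ_eq_sum_range (fun n : ℕ =>
    ((Real.sqrt n : ℂ) * (if (j:ℕ) + 1 = n then 1 else 0)) *
    ((Real.sqrt ((k:ℕ) + 1) : ℂ) * (if n = (k:ℕ) + 1 then 1 else 0)))]
  have hcg : ∀ n ∈ Finset.range (N+1),
      ((Real.sqrt n : ℂ) * (if (j:ℕ) + 1 = n then 1 else 0)) *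
      ((Real.sqrt ((k:ℕ) + 1) : ℂ) * (if n = (k:ℕ) + 1 then 1 else 0)) =
      (if n = (j:ℕ) + 1 then
        ((Real.sqrt n : ℂ) * ((Real.sqrt ((k:ℕ) + 1) : ℂ) * (if n = (k:ℕ) + 1 then 1 else 0)))
       else 0) := by
    intro n _
    by_cases h : (j:ℕ) + 1 = n
    · rw [if_pos h, if_pos (show n = (j:ℕ) + 1 from h.symm)]; ring
    · rw [if_neg h, if_neg (show ¬ (n = (j:ℕ) + 1) from fun hn => h hn.symm)]; ring
  rw [Finset.sum_congr rfl hcg, sum_delta]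
  by_cases hj : (j:ℕ) + 1 < N + 1
  · rw [if_pos hj]
    by_cases hjk : j = k
    · subst hjk
      rw [if_pos (show (j:ℕ) + 1 = (j:ℕ) + 1 from rfl), if_pos ⟨rfl, by omega⟩, mul_one]
      rw [← Complex.ofReal_mul,
        show Real.sqrt ((j:ℕ)+1 : ℕ) * Real.sqrt (((j:ℕ):ℝ) + 1) = (((j:ℕ):ℝ) + 1) from by
          rw [show (((j:ℕ)+1 : ℕ):ℝ) = ((j:ℕ):ℝ) + 1 from by push_cast; ring,
            Real.mul_self_sqrt (by positivity)]]
      push_cast; ring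
    · have hne : ¬ ((j:ℕ) + 1 = (k:ℕ) + 1) := fun h => hjk (Fin.ext (by omega))
      rw [if_neg hne, if_neg (show ¬ (j = k ∧ (k:ℕ) < N) from by tauto)]
      ring
  · have hk : ¬ (j = k ∧ (k:ℕ) < N) := by rintro ⟨rfl, h⟩; omega
    rw [if_neg hj, if_neg hk]

lemma CA_apply (N : ℕ) (j k : Fin (N+1)) :
    (Cmat N * Amat N) j k = if j = k then ((k:ℕ) : ℂ) else 0 := by
  simp only [Cmat, Amat, Matrix.mul_apply, Matrix.of_apply]
  rw [Fin.sum_univ_eq_sum_range (fun n : ℕ =>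
    ((Real.sqrt (n + 1) : ℂ) * (if (j:ℕ) = n + 1 then 1 else 0)) *
    ((Real.sqrt (k:ℕ) : ℂ) * (if n + 1 = (k:ℕ) then 1 else 0)))]
  rcases Nat.eq_zero_or_pos (k:ℕ) with hk0 | hk0
  · have hz : ∀ n ∈ Finset.range (N+1),
        ((Real.sqrt (n + 1) : ℂ) * (if (j:ℕ) = n + 1 then 1 else 0)) *
        ((Real.sqrt (k:ℕ) : ℂ) * (if n + 1 = (k:ℕ) then 1 else 0)) = 0 := by
      intro n _; rw [if_neg (show ¬ (n + 1 = (k:ℕ)) from by omega)]; ring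
    rw [Finset.sum_congr rfl hz, Finset.sum_const_zero]
    by_cases hjk : j = k <;> simp [hjk, hk0]
  · obtain ⟨k', hk'⟩ : ∃ k', (k:ℕ) = k' + 1 := ⟨(k:ℕ) - 1, by omega⟩
    have hcg : ∀ n ∈ Finset.range (N+1),
        ((Real.sqrt (n + 1) : ℂ) * (if (j:ℕ) = n + 1 then 1 else 0)) *
        ((Real.sqrt (k:ℕ) : ℂ) * (if n + 1 = (k:ℕ) then 1 else 0)) =
        (if n = k' then
          ((Real.sqrt (n + 1) : ℂ) * (if (j:ℕ) = n + 1 then 1 else 0)) * (Real.sqrt (k:ℕ) : ℂ)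
         else 0) := by
      intro n _
      by_cases h : n = k'
      · rw [if_pos h, if_pos (show n + 1 = (k:ℕ) from by omega), mul_one]
      · rw [if_neg h, if_neg (show ¬ (n + 1 = (k:ℕ)) from by omega)]; ring
    rw [Finset.sum_congr rfl hcg, sum_delta, if_pos (by omega : k' < N + 1)]
    have hs : ((Real.sqrt ((k':ℝ) + 1) : ℂ)) * (Real.sqrt (k:ℕ) : ℂ) = ((k:ℕ) : ℂ) := by
      rw [← Complex.ofReal_mul,
        show ((k':ℕ):ℝ) + 1 = (((k:ℕ)):ℝ) from by exact_mod_cast hk'.symm,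
        Real.mul_self_sqrt (by positivity)]
      norm_cast
    by_cases hjk : j = k
    · subst hjk
      rw [if_pos (show (j:ℕ) = k' + 1 from by omega), if_pos rfl, mul_one]
      exact hs
    · rw [if_neg (show ¬ ((j:ℕ) = k' + 1) from fun h => hjk (Fin.ext (by omega))),
        if_neg hjk]
      ring

lemma Q_eq (N : ℕ) : Qmat N = ((Real.sqrt 2 : ℂ))⁻¹ • (Cmat N + Amat N) := by
  ext j k
  simp only [Qmat, Cmat, Amat, Matrix.of_apply, Matrix.smul_apply, Matrix.add_apply, smul_eq_mul]
  push_cast [apply_ite (Complex.ofReal)]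
  ring

lemma P_eq (N : ℕ) : Pmat N = (Complex.I * ((Real.sqrt 2 : ℂ))⁻¹) • (Cmat N - Amat N) := by
  ext j k
  simp only [Pmat, Cmat, Amat, Matrix.of_apply, Matrix.smul_apply, Matrix.sub_apply, smul_eq_mul]
  ring

lemma Dmat_eq (N : ℕ) : Dmat N = Amat N * Cmat N - Cmat N * Amat N := by
  have h2 : ((Real.sqrt 2 : ℂ))⁻¹ * ((Real.sqrt 2 : ℂ))⁻¹ = (2 : ℂ)⁻¹ := by
    rw [← Complex.ofReal_inv, ← Complex.ofReal_mul, ← mul_inv,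
      Real.mul_self_sqrt (by norm_num)]
    norm_num
  have hX : (Cmat N + Amat N) * (Cmat N - Amat N) - (Cmat N - Amat N) * (Cmat N + Amat N)
      = (2 : ℂ) • (Amat N * Cmat N - Cmat N * Amat N) := by
    simp only [two_smul]
    noncomm_ring
  rw [Dmat, Q_eq, P_eq]
  simp only [Matrix.smul_mul, Matrix.mul_smul, smul_smul, ← smul_sub]
  rw [show ((Real.sqrt 2 : ℂ))⁻¹ * (Complex.I * ((Real.sqrt 2 : ℂ))⁻¹)
        = Complex.I * (2:ℂ)⁻¹ by rw [← h2]; ring,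
      show Complex.I * ((Real.sqrt 2 : ℂ))⁻¹ * ((Real.sqrt 2 : ℂ))⁻¹
        = Complex.I * (2:ℂ)⁻¹ by rw [mul_assoc, h2], ← smul_sub, hX]
  rw [smul_smul, smul_smul]
  rw [show Complex.I⁻¹ * (Complex.I * (2:ℂ)⁻¹) * 2 = 1 by field_simp]
  rw [one_smul]

lemma Dmat_apply (N : ℕ) (j k : Fin (N+1)) :
    Dmat N j k = if j = k then (if (k:ℕ) < N then 1 else -(N:ℂ)) else 0 := by
  rw [Dmat_eq, Matrix.sub_apply, AC_apply, CA_apply]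
  by_cases hjk : j = k
  · subst hjk
    by_cases h : (j:ℕ) < N
    · simp [h]
    · have hN : (j:ℕ) = N := by omega
      simp [h, hN]
  · simp [hjk]

/-- if the last component of `ψ` vanishes, then the expectation value of the
action difference equals the squared norm of `ψ`: `⟨ψ, D_N ψ⟩ = Σ_k |ψ_k|²`. -/
theorem action_difference_expectation_of_last_component_zero (N : ℕ)
    (ψ : Fin (N+1) → ℂ) (hlast : ψ (Fin.last N) = 0) :
    star ψ ⬝ᵥ (Dmat N).mulVec ψ =
      ((∑ k : Fin (N+1), ‖ψ k‖ ^ 2 : ℝ) : ℂ) := by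
  have hmv : ∀ j, (Dmat N).mulVec ψ j = (if (j:ℕ) < N then 1 else -(N:ℂ)) * ψ j := by
    intro j
    simp only [Matrix.mulVec, dotProduct, Dmat_apply, ite_mul, zero_mul, mul_ite]
    rw [Finset.sum_ite_eq Finset.univ j
      (fun k => if (k:ℕ) < N then (1:ℂ) * ψ k else -(N:ℂ) * ψ k)]
    by_cases h : (j:ℕ) < N <;> simp [h]
  simp only [dotProduct, hmv, Pi.star_apply]
  push_cast
  apply Finset.sum_congr rfl
  intro j _
  by_cases hj : (j:ℕ) < N
  · rw [if_pos hj, one_mul]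
    rw [show ((‖ψ j‖ : ℝ) : ℂ) ^ 2 = ((‖ψ j‖ ^ 2 : ℝ) : ℂ) from by
      push_cast; ring, ← Complex.normSq_eq_norm_sq, ← Complex.mul_conj, mul_comm]
    rfl
  · have hlj : j = Fin.last N := Fin.ext (by simp only [Fin.val_last]; omega)
    rw [hlj, hlast]
    simp
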